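/- arXiv:2002.08586 — 3 statements merged into one kernel-verified Lean document; each statement's English description precedes it below -/
import Mathlib

section
/- Let A be a symmetric n×n real matrix with n distinct eigenvalues λ_1, …, λ_n and corresponding orthonormal eigenvectors v_1, …, v_n, each satisfying v_iᵀ·1 ≠ 0. If P is an n×n real matrix with P·1 = 1 and PA = AP, then P = I_n. -/
open Matrix

theorem stmt_11 (n : ℕ) (A : Matrix (Fin n) (Fin n) ℝ) (hA : Aᵀ = A)
    (lam : Fin n → ℝ) (v : Fin n → (Fin n → ℝ))
    (heig : ∀ i, A.mulVec (v i) = lam i • v i)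
    (hdistinct : Function.Injective lam)
    (horth : ∀ i j, dotProduct (v i) (v j) = if i = j then 1 else 0)
    (hfriendly : ∀ i, dotProduct (v i) (fun _ => (1 : ℝ)) ≠ 0)
    (P : Matrix (Fin n) (Fin n) ℝ)
    (hP1 : P.mulVec (fun _ => (1 : ℝ)) = fun _ => 1)
    (hcomm : P * A = A * P) :
    P = 1 := by
  set V : Matrix (Fin n) (Fin n) ℝ := Matrix.of v with hV
  have hVVt : V * Vᵀ = 1 := by
    ext i j
    simpa [Matrix.mul_apply, Matrix.one_apply, dotProduct, V] using horth i j
  have hVtV : Vᵀ * V = 1 := mul_eq_one_comm.mp hVVt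
  set D : Matrix (Fin n) (Fin n) ℝ := Matrix.diagonal lam with hD
  have hAVt : A * Vᵀ = Vᵀ * D := by
    ext j i
    have h := congrFun (heig i) j
    simp only [Matrix.mulVec, dotProduct, Pi.smul_apply, smul_eq_mul] at h
    simp only [D, Matrix.mul_diagonal, Matrix.mul_apply, Matrix.transpose_apply, V,
      Matrix.of_apply]
    rw [h, mul_comm]
    rw [Finset.sum_eq_single i]
    · rw [Matrix.diagonal_apply_eq]
    · intro b _ hb; simp [Matrix.diagonal_apply, hb]
    · intro h'; simp at h'
  have hAeq : A = Vᵀ * D * V := by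
    calc A = A * (Vᵀ * V) := by rw [hVtV, Matrix.mul_one]
    _ = (A * Vᵀ) * V := by rw [Matrix.mul_assoc]
    _ = Vᵀ * D * V := by rw [hAVt]
  set Q : Matrix (Fin n) (Fin n) ℝ := V * P * Vᵀ with hQ
  have hQD : Q * D = D * Q := by
    have h1 : P * (Vᵀ * D * V) = (Vᵀ * D * V) * P := by rw [← hAeq]; exact hcomm
    calc Q * D = V * P * Vᵀ * D * (V * Vᵀ) := by rw [hVVt, Matrix.mul_one]
    _ = V * (P * (Vᵀ * D * V)) * Vᵀ := by simp only [Matrix.mul_assoc]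
    _ = V * ((Vᵀ * D * V) * P) * Vᵀ := by rw [h1]
    _ = (V * Vᵀ) * (D * (V * P * Vᵀ)) := by simp only [Matrix.mul_assoc]
    _ = D * Q := by rw [hVVt, Matrix.one_mul]
  have hoff : ∀ i j, i ≠ j → Q i j = 0 := by
    intro i j hij
    have h := congrFun (congrFun hQD i) j
    simp only [D, Matrix.mul_diagonal, Matrix.diagonal_mul] at h
    have h2 : Q i j * (lam j - lam i) = 0 := by linear_combination h
    rcases mul_eq_zero.mp h2 with h0 | h0
    · exact h0
    · exact absurd (hdistinct (sub_eq_zero.mp h0)).symm hij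
  set w : Fin n → ℝ := V.mulVec (fun _ => (1:ℝ)) with hw
  have hwne : ∀ i, w i ≠ 0 := by
    intro i
    simpa [w, Matrix.mulVec, dotProduct, V] using hfriendly i
  have hQw : Q.mulVec w = w := by
    have h1 : Q * V = V * P := by
      calc Q * V = V * P * (Vᵀ * V) := by simp only [hQ, Matrix.mul_assoc]
      _ = V * P := by rw [hVtV, Matrix.mul_one]
    rw [hw, Matrix.mulVec_mulVec, h1, ← Matrix.mulVec_mulVec, hP1]
  have hdiag : ∀ i, Q i i = 1 := by
    intro i
    have h := congrFun hQw i
    simp only [Matrix.mulVec, dotProduct] at h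
    rw [Finset.sum_eq_single i] at h
    · exact mul_right_cancel₀ (hwne i) (h.trans (one_mul (w i)).symm)
    · intro b _ hb; rw [hoff i b (Ne.symm hb), zero_mul]
    · intro h'; simp at h'
  have hQ1 : Q = 1 := by
    ext i j
    by_cases hij : i = j
    · subst hij; simp [hdiag i]
    · simp [hoff i j hij, Matrix.one_apply_ne hij]
  calc P = (Vᵀ * V) * P * (Vᵀ * V) := by rw [hVtV, Matrix.one_mul, Matrix.mul_one]
  _ = Vᵀ * Q * V := by simp only [hQ, Matrix.mul_assoc]
  _ = Vᵀ * V := by rw [hQ1, Matrix.mul_one]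
  _ = 1 := hVtV
end

section
/- If a symmetric n×n real matrix A has n distinct eigenvalues with orthonormal eigenvectors v_1,…,v_n each satisfying v_iᵀ·1 ≠ 0, then the only permutation matrix Π with A = ΠᵀAΠ is the identity (i.e., the graph with adjacency matrix A is asymmetric). -/
open Matrix

theorem stmt_12 (n : ℕ) (A : Matrix (Fin n) (Fin n) ℝ) (hA : Aᵀ = A)
    (lam : Fin n → ℝ) (v : Fin n → (Fin n → ℝ))
    (heig : ∀ i, A.mulVec (v i) = lam i • v i)
    (hdistinct : Function.Injective lam)
    (horth : ∀ i j, dotProduct (v i) (v j) = if i = j then 1 else 0)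
    (hfriendly : ∀ i, dotProduct (v i) (fun _ => (1 : ℝ)) ≠ 0)
    (Pi : Matrix (Fin n) (Fin n) ℝ)
    (hPi01 : ∀ i j, Pi i j = 0 ∨ Pi i j = 1)
    (hrow : ∀ i, ∑ j, Pi i j = 1)
    (hcol : ∀ j, ∑ i, Pi i j = 1)
    (hauto : A = Piᵀ * A * Pi) :
    Pi = 1 := by
  have hnonneg : ∀ i j, 0 ≤ Pi i j := by
    intro i j; rcases hPi01 i j with h | h <;> rw [h] <;> norm_num
  -- Pi is orthogonal
  have hPP : Piᵀ * Pi = 1 := by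
    ext j k
    simp only [Matrix.mul_apply, Matrix.transpose_apply, Matrix.one_apply]
    by_cases hjk : j = k
    · subst hjk
      simp only [if_pos rfl]
      calc ∑ i, Pi i j * Pi i j = ∑ i, Pi i j := by
            refine Finset.sum_congr rfl fun i _ => ?_
            rcases hPi01 i j with h | h <;> rw [h] <;> ring
        _ = 1 := hcol j
    · rw [if_neg hjk]
      refine Finset.sum_eq_zero fun i _ => ?_
      by_contra hne
      have hj1 : Pi i j = 1 := by
        rcases hPi01 i j with h | h
        · exact absurd (by rw [h]; ring) hne
        · exact h
      have hk1 : Pi i k = 1 := by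
        rcases hPi01 i k with h | h
        · exact absurd (by rw [hj1, h]; ring) hne
        · exact h
      have hsplit : Pi i j + ∑ j' ∈ Finset.univ.erase j, Pi i j' = 1 := by
        rw [Finset.add_sum_erase _ _ (Finset.mem_univ j)]; exact hrow i
      have hge : Pi i k ≤ ∑ j' ∈ Finset.univ.erase j, Pi i j' := by
        refine Finset.single_le_sum (fun x _ => hnonneg i x) ?_
        exact Finset.mem_erase.mpr ⟨fun h => hjk h.symm, Finset.mem_univ k⟩
      rw [hj1] at hsplit
      rw [hk1] at hge
      linarith
  have hPPt : Pi * Piᵀ = 1 := mul_eq_one_comm.mp hPP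
  -- Pi commutes with A
  have hcomm : Pi * A = A * Pi := by
    calc Pi * A = Pi * (Piᵀ * A * Pi) := by rw [← hauto]
      _ = (Pi * Piᵀ) * A * Pi := by rw [← Matrix.mul_assoc, ← Matrix.mul_assoc]
      _ = A * Pi := by rw [hPPt, Matrix.one_mul]
  set w : Fin n → (Fin n → ℝ) := fun i => Pi.mulVec (v i) with hw
  have hweig : ∀ i, A.mulVec (w i) = lam i • w i := by
    intro i
    calc A.mulVec (w i) = (A * Pi).mulVec (v i) := by rw [hw, Matrix.mulVec_mulVec]
      _ = (Pi * A).mulVec (v i) := by rw [hcomm]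
      _ = Pi.mulVec (A.mulVec (v i)) := by rw [Matrix.mulVec_mulVec]
      _ = Pi.mulVec (lam i • v i) := by rw [heig i]
      _ = lam i • w i := by rw [Matrix.mulVec_smul]
  set c : Fin n → Fin n → ℝ := fun j i => dotProduct (v j) (w i) with hc
  have hcoff : ∀ j i, j ≠ i → c j i = 0 := by
    intro j i hji
    have h1 : dotProduct (v j) (A.mulVec (w i)) = lam i * c j i := by
      rw [hweig i, dotProduct_smul, smul_eq_mul]
    have h2 : dotProduct (v j) (A.mulVec (w i)) = lam j * c j i := by
      rw [Matrix.dotProduct_mulVec, ← Matrix.mulVec_transpose, hA, heig j,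
        smul_dotProduct, smul_eq_mul]
    have hll : lam j ≠ lam i := fun h => hji (hdistinct h)
    have : (lam j - lam i) * c j i = 0 := by rw [sub_mul]; rw [h1] at h2; linarith
    rcases mul_eq_zero.mp this with h | h
    · exact absurd (by linarith : lam j = lam i) hll
    · exact h
  -- V matrix with rows v i
  set V : Matrix (Fin n) (Fin n) ℝ := Matrix.of (fun i j => v i j) with hV
  have hVVt : V * Vᵀ = 1 := by
    ext i j
    simp only [Matrix.mul_apply, Matrix.transpose_apply, Matrix.one_apply, hV, Matrix.of_apply]
    exact horth i j
  have hVtV : Vᵀ * V = 1 := mul_eq_one_comm.mp hVVt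
  -- w i = c i i • v i
  have hwc : ∀ i, w i = fun k => c i i * v i k := by
    intro i
    have hid : w i = (Vᵀ * V).mulVec (w i) := by rw [hVtV, Matrix.one_mulVec]
    funext k
    rw [hid]
    rw [← Matrix.mulVec_mulVec]
    show ∑ j, Vᵀ k j * (V.mulVec (w i)) j = _
    have hVm : ∀ j, (V.mulVec (w i)) j = c j i := by
      intro j; rfl
    calc ∑ j, Vᵀ k j * (V.mulVec (w i)) j = ∑ j, v j k * c j i := by
          refine Finset.sum_congr rfl fun j _ => by rw [hVm]; rfl
      _ = v i k * c i i := by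
          refine Finset.sum_eq_single i (fun j _ hji => ?_) (fun h => absurd (Finset.mem_univ i) h)
          rw [hcoff j i hji, mul_zero]
      _ = c i i * v i k := mul_comm _ _
  -- Pi^T 1 = 1
  have hPt1 : Piᵀ.mulVec (fun _ => (1 : ℝ)) = fun _ => (1 : ℝ) := by
    funext j
    show ∑ i, Piᵀ j i * 1 = 1
    simp only [mul_one, Matrix.transpose_apply]
    exact hcol j
  have hdot1 : ∀ i, dotProduct (w i) (fun _ => (1 : ℝ))
      = dotProduct (v i) (fun _ => (1 : ℝ)) := by
    intro i
    rw [dotProduct_comm, hw]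
    show dotProduct (fun _ => (1:ℝ)) (Pi.mulVec (v i)) = _
    rw [Matrix.dotProduct_mulVec, ← Matrix.mulVec_transpose, hPt1, dotProduct_comm]
  have hcii : ∀ i, c i i = 1 := by
    intro i
    have h1 := hdot1 i
    rw [hwc i] at h1
    have h2 : dotProduct (fun k => c i i * v i k) (fun _ => (1:ℝ))
        = c i i * dotProduct (v i) (fun _ => (1:ℝ)) := by
      simp only [dotProduct, Finset.mul_sum, mul_one]
    rw [h2] at h1
    have := hfriendly i
    have hsub : (c i i - 1) * dotProduct (v i) (fun _ => (1:ℝ)) = 0 := by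
      rw [sub_mul]; linarith
    rcases mul_eq_zero.mp hsub with h | h
    · linarith
    · exact absurd h this
  have hwv : ∀ i, w i = v i := by
    intro i
    funext k
    rw [hwc i]
    show c i i * v i k = v i k
    rw [hcii i, one_mul]
  -- Pi * Vᵀ = Vᵀ, hence Pi = 1
  have hPVt : Pi * Vᵀ = Vᵀ := by
    ext k i
    have : (Pi * Vᵀ) k i = (Pi.mulVec (v i)) k := by
      simp only [Matrix.mul_apply, Matrix.mulVec, dotProduct, Matrix.transpose_apply, hV,
        Matrix.of_apply]
    rw [this]
    show w i k = Vᵀ k i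
    rw [hwv i]
    rfl
  calc Pi = Pi * (Vᵀ * V) := by rw [hVtV, Matrix.mul_one]
    _ = (Pi * Vᵀ) * V := by rw [Matrix.mul_assoc]
    _ = Vᵀ * V := by rw [hPVt]
    _ = 1 := hVtV
end

section
/- Let f(x) = Mx + b be an affine map on R^n. If for every initial condition x_0 the solution of ẋ = f(x), x(0) = x_0 converges to some equilibrium as t → ∞, then the convergence is exponentially fast: there exist constants C, α > 0 (possibly depending on x_0) such that ‖x(t) - x̄‖ ≤ C e^{-αt} for the limiting equilibrium x̄. -/
open Filter Topology NormedSpace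

section aux

variable {n : ℕ} (M : Matrix (Fin n) (Fin n) ℝ)

noncomputable def Lop : EuclideanSpace ℝ (Fin n) →L[ℝ] EuclideanSpace ℝ (Fin n) :=
  LinearMap.toContinuousLinearMap
    { toFun := fun v => (show EuclideanSpace ℝ (Fin n) from WithLp.toLp 2 (M.mulVec v))
      map_add' := fun a c => by simp [Matrix.mulVec_add]
      map_smul' := fun r a => by simp [Matrix.mulVec_smul] }

lemma Lop_apply (v : EuclideanSpace ℝ (Fin n)) :
    Lop M v = (show EuclideanSpace ℝ (Fin n) from WithLp.toLp 2 (M.mulVec v)) := rfl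

lemma smul_Lop_commute (s t : ℝ) : Commute (s • Lop M) (t • Lop M) := by
  unfold Commute SemiconjBy
  ext v
  simp only [ContinuousLinearMap.mul_apply, ContinuousLinearMap.smul_apply, map_smul]
  rw [smul_comm]

noncomputable def Phi (t : ℝ) : EuclideanSpace ℝ (Fin n) →L[ℝ] EuclideanSpace ℝ (Fin n) :=
  NormedSpace.exp (t • Lop M)

lemma Phi_deriv (t : ℝ) : HasDerivAt (Phi M) (Lop M * Phi M t) t :=
  hasDerivAt_exp_smul_const' (Lop M) t

lemma Phi_zero : Phi M 0 = 1 := by rw [Phi, zero_smul ℝ (Lop M), exp_zero]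

lemma Phi_add (s t : ℝ) : Phi M (s + t) = Phi M s * Phi M t := by
  have h : (s + t) • Lop M = s • Lop M + t • Lop M := add_smul s t (Lop M)
  rw [Phi, Phi, Phi, h]
  letI : NormedAlgebra ℚ (EuclideanSpace ℝ (Fin n) →L[ℝ] EuclideanSpace ℝ (Fin n)) :=
    NormedAlgebra.restrictScalars ℚ ℝ _
  exact exp_add_of_commute (smul_Lop_commute M s t)

lemma Lop_Phi_comm (t : ℝ) : Lop M * Phi M t = Phi M t * Lop M := by
  have : Commute (Lop M) (t • Lop M) := by
    unfold Commute SemiconjBy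
    ext v
    simp only [ContinuousLinearMap.mul_apply, ContinuousLinearMap.smul_apply, map_smul]
  exact this.exp_right.symm ▸ rfl

lemma Phi_apply_deriv (v : EuclideanSpace ℝ (Fin n)) (t : ℝ) :
    HasDerivAt (fun s => Phi M s v) (Lop M (Phi M t v)) t := by
  have := (Phi_deriv M t).clm_apply (hasDerivAt_const t v)
  simpa using this

lemma Phi_neg_deriv (t : ℝ) :
    HasDerivAt (fun s => Phi M (-s)) (-(Lop M * Phi M (-t))) t := by
  have h1 : HasDerivAt (Phi M) (Lop M * Phi M (-t)) (-t) := Phi_deriv M (-t)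
  have h2 : HasDerivAt (fun s : ℝ => -s) (-1 : ℝ) t := (hasDerivAt_id t).neg
  have := h1.scomp t h2
  simp at this; exact this

lemma sol_diff (b : EuclideanSpace ℝ (Fin n)) (x1 x2 : ℝ → EuclideanSpace ℝ (Fin n))
    (h1 : ∀ t : ℝ, HasDerivAt x1 ((show EuclideanSpace ℝ (Fin n) from WithLp.toLp 2 (M.mulVec (x1 t))) + b) t)
    (h2 : ∀ t : ℝ, HasDerivAt x2 ((show EuclideanSpace ℝ (Fin n) from WithLp.toLp 2 (M.mulVec (x2 t))) + b) t)
    (t : ℝ) : x1 t - x2 t = Phi M t (x1 0 - x2 0) := by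
  set d := fun s => x1 s - x2 s with hd_def
  have hd : ∀ s, HasDerivAt d (Lop M (d s)) s := by
    intro s
    have := (h1 s).sub (h2 s)
    refine this.congr_deriv ?_; symm
    rw [Lop_apply]
    show (show EuclideanSpace ℝ (Fin n) from WithLp.toLp 2 (M.mulVec (x1 s - x2 s))) = _
    rw [show (WithLp.toLp 2 (M.mulVec (x1 s - x2 s)) : EuclideanSpace ℝ (Fin n)) =
      (show EuclideanSpace ℝ (Fin n) from WithLp.toLp 2 (M.mulVec (x1 s))) -
      (show EuclideanSpace ℝ (Fin n) from WithLp.toLp 2 (M.mulVec (x2 s))) from by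
        simp [Matrix.mulVec_sub]]
    abel
  set g := fun s => Phi M (-s) (d s) with hg_def
  have hg : ∀ s, HasDerivAt g 0 s := by
    intro s
    have := (Phi_neg_deriv M s).clm_apply (hd s)
    refine this.congr_deriv ?_; symm
    have hcomm : Phi M (-s) (Lop M (d s)) = (Lop M * Phi M (-s)) (d s) := by
      rw [Lop_Phi_comm]; rfl
    simp only [ContinuousLinearMap.neg_apply, hcomm]
    abel
  have hgconst : ∀ s, g s = g 0 :=
    fun s => is_const_of_deriv_eq_zero (fun u => (hg u).differentiableAt)
      (fun u => (hg u).deriv) s 0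
  have hinv : Phi M t (Phi M (-t) (d t)) = d t := by
    have : Phi M t * Phi M (-t) = 1 := by
      rw [← Phi_add, add_neg_cancel, Phi_zero]
    calc Phi M t (Phi M (-t) (d t)) = (Phi M t * Phi M (-t)) (d t) := rfl
      _ = d t := by rw [this]; rfl
  have hg0 : g 0 = d 0 := by simp [hg_def, neg_zero, Phi_zero]
  calc d t = Phi M t (g t) := hinv.symm
    _ = Phi M t (g 0) := by rw [hgconst t]
    _ = Phi M t (d 0) := by rw [hg0]

lemma tendsto_Phi_op (hpt : ∀ v, ∃ w, Tendsto (fun t : ℝ => Phi M t v) atTop (𝓝 w)) :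
    ∃ P : EuclideanSpace ℝ (Fin n) →L[ℝ] EuclideanSpace ℝ (Fin n),
      Tendsto (fun t : ℝ => Phi M t) atTop (𝓝 P) := by
  classical
  choose w hw using hpt
  set c := Module.Basis.ofVectorSpace ℝ (EuclideanSpace ℝ (Fin n)) with hc
  set P : EuclideanSpace ℝ (Fin n) →L[ℝ] EuclideanSpace ℝ (Fin n) :=
    LinearMap.toContinuousLinearMap (c.constr ℝ (fun i => w (c i))) with hP
  have hPc : ∀ i, P (c i) = w (c i) := fun i => c.constr_basis ℝ _ i
  have hcoord : ∀ i, ∃ K : ℝ, 0 ≤ K ∧ ∀ v, |c.repr v i| ≤ K * ‖v‖ := by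
    intro i
    set f := LinearMap.toContinuousLinearMap (c.coord i) with hf
    refine ⟨‖f‖, norm_nonneg f, fun v => ?_⟩
    have := f.le_opNorm v
    simpa [hf, Real.norm_eq_abs, Module.Basis.coord_apply] using this
  choose K hK0 hK using hcoord
  have key : ∀ (t : ℝ) v, ‖(Phi M t - P) v‖ ≤
      (∑ i, K i * ‖Phi M t (c i) - w (c i)‖) * ‖v‖ := by
    intro t v
    have hv : (Phi M t - P) v = ∑ i, c.repr v i • ((Phi M t - P) (c i)) := by
      conv_lhs => rw [← c.sum_repr v]
      rw [map_sum]
      simp [map_smul]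
    rw [hv]
    calc ‖∑ i, c.repr v i • ((Phi M t - P) (c i))‖
        ≤ ∑ i, ‖c.repr v i • ((Phi M t - P) (c i))‖ := norm_sum_le _ _
      _ = ∑ i, |c.repr v i| * ‖Phi M t (c i) - w (c i)‖ := by
          refine Finset.sum_congr rfl fun i _ => ?_
          rw [norm_smul, Real.norm_eq_abs, ContinuousLinearMap.sub_apply, hPc]
      _ ≤ ∑ i, (K i * ‖v‖) * ‖Phi M t (c i) - w (c i)‖ := by
          refine Finset.sum_le_sum fun i _ => ?_
          exact mul_le_mul_of_nonneg_right (hK i v) (norm_nonneg _)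
      _ = (∑ i, K i * ‖Phi M t (c i) - w (c i)‖) * ‖v‖ := by
          rw [Finset.sum_mul]
          exact Finset.sum_congr rfl fun i _ => by ring
  have hnorm : ∀ t : ℝ, ‖Phi M t - P‖ ≤ ∑ i, K i * ‖Phi M t (c i) - w (c i)‖ := by
    intro t
    refine ContinuousLinearMap.opNorm_le_bound _ ?_ (key t)
    exact Finset.sum_nonneg fun i _ => mul_nonneg (hK0 i) (norm_nonneg _)
  have hδ : Tendsto (fun t : ℝ => ∑ i, K i * ‖Phi M t (c i) - w (c i)‖) atTop (𝓝 0) := by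
    have : ∀ i : Module.Basis.ofVectorSpaceIndex ℝ (EuclideanSpace ℝ (Fin n)),
        Tendsto (fun t : ℝ => K i * ‖Phi M t (c i) - w (c i)‖) atTop (𝓝 0) := by
      intro i
      have h1 : Tendsto (fun t : ℝ => Phi M t (c i) - w (c i)) atTop (𝓝 0) := by
        simpa using (hw (c i)).sub (tendsto_const_nhds (x := w (c i)))
      have h2 := h1.norm
      simpa using (tendsto_const_nhds (x := K i)).mul h2
    have := tendsto_finset_sum Finset.univ (fun i _ => this i)
    simpa using this
  refine ⟨P, ?_⟩
  rw [tendsto_iff_norm_sub_tendsto_zero]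
  exact squeeze_zero (fun t => norm_nonneg _) hnorm hδ

end aux
theorem stmt_18 (n : ℕ) (M : Matrix (Fin n) (Fin n) ℝ) (b : EuclideanSpace ℝ (Fin n))
    (hconv : ∀ x : ℝ → EuclideanSpace ℝ (Fin n),
      (∀ t : ℝ, HasDerivAt x ((show EuclideanSpace ℝ (Fin n) from WithLp.toLp 2 (M.mulVec (x t))) + b) t) →
      ∃ xbar : EuclideanSpace ℝ (Fin n), Tendsto x atTop (𝓝 xbar)) :
    ∀ x : ℝ → EuclideanSpace ℝ (Fin n),
      (∀ t : ℝ, HasDerivAt x ((show EuclideanSpace ℝ (Fin n) from WithLp.toLp 2 (M.mulVec (x t))) + b) t) →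
      ∃ (xbar : EuclideanSpace ℝ (Fin n)) (C α : ℝ), 0 < C ∧ 0 < α ∧
        Tendsto x atTop (𝓝 xbar) ∧
        ∀ t : ℝ, 0 ≤ t → ‖x t - xbar‖ ≤ C * Real.exp (-α * t) := by
  intro x hx
  obtain ⟨xbar, hxbar⟩ := hconv x hx
  -- shifted solutions
  have hshift : ∀ s t : ℝ,
      HasDerivAt (fun u => x (u + s))
        ((show EuclideanSpace ℝ (Fin n) from WithLp.toLp 2 (M.mulVec (x (t + s)))) + b) t := by
    intro s t
    have h1 : HasDerivAt (fun u : ℝ => u + s) 1 t := (hasDerivAt_id t).add_const s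
    have := (hx (t + s)).scomp t h1
    simp only [one_smul] at this; exact this
  -- key representation
  have hrep : ∀ t : ℝ, x t - xbar = Phi M t (x 0 - xbar) := by
    intro t
    have hps : ∀ s : ℝ, x t - x (t + s) = Phi M t (x 0 - x s) := by
      intro s
      have := sol_diff M b x (fun u => x (u + s)) hx (hshift s) t
      simpa using this
    have h1 : Tendsto (fun s : ℝ => x t - x (t + s)) atTop (𝓝 (x t - xbar)) := by
      have h0 : Tendsto (fun s : ℝ => x (t + s)) atTop (𝓝 xbar) :=
        hxbar.comp (tendsto_atTop_add_const_left _ t tendsto_id)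
      exact tendsto_const_nhds.sub h0
    have h2 : Tendsto (fun s : ℝ => Phi M t (x 0 - x s)) atTop
        (𝓝 (Phi M t (x 0 - xbar))) :=
      ((Phi M t).continuous.tendsto _).comp (tendsto_const_nhds.sub hxbar)
    rw [show (fun s : ℝ => x t - x (t + s)) = fun s => Phi M t (x 0 - x s) from
      funext hps] at h1
    exact tendsto_nhds_unique h1 h2
  -- pointwise convergence of the semigroup
  have hptconv : ∀ v : EuclideanSpace ℝ (Fin n),
      ∃ w, Tendsto (fun t : ℝ => Phi M t v) atTop (𝓝 w) := by
    intro v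
    have hz : ∀ t : ℝ, HasDerivAt (fun u => x u + Phi M u v)
        ((show EuclideanSpace ℝ (Fin n) from WithLp.toLp 2 (M.mulVec (x t + Phi M t v))) + b) t := by
      intro t
      have := (hx t).add (Phi_apply_deriv M v t)
      refine this.congr_deriv ?_; symm
      rw [show (show EuclideanSpace ℝ (Fin n) from WithLp.toLp 2 (M.mulVec (x t + Phi M t v))) =
        (show EuclideanSpace ℝ (Fin n) from WithLp.toLp 2 (M.mulVec (x t))) +
        (show EuclideanSpace ℝ (Fin n) from WithLp.toLp 2 (M.mulVec (Phi M t v))) from by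
        simp [Matrix.mulVec_add], ← Lop_apply M (Phi M t v)]
      abel
    obtain ⟨w, hw⟩ := hconv _ hz
    refine ⟨w - xbar, ?_⟩
    have := hw.sub hxbar
    simpa using this
  obtain ⟨P, hP⟩ := tendsto_Phi_op M hptconv
  -- semigroup identities for the limit projection
  have hmulP : ∀ s : ℝ, Phi M s * P = P := by
    intro s
    have h1 : Tendsto (fun t : ℝ => Phi M s * Phi M t) atTop (𝓝 (Phi M s * P)) :=
      tendsto_const_nhds.mul hP
    have h2 : Tendsto (fun t : ℝ => Phi M (s + t)) atTop (𝓝 P) :=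
      hP.comp (tendsto_atTop_add_const_left _ s tendsto_id)
    rw [show (fun t : ℝ => Phi M (s + t)) = fun t => Phi M s * Phi M t from
      funext fun t => Phi_add M s t] at h2
    exact tendsto_nhds_unique h1 h2
  have hPmul : ∀ s : ℝ, P * Phi M s = P := by
    intro s
    have h1 : Tendsto (fun t : ℝ => Phi M t * Phi M s) atTop (𝓝 (P * Phi M s)) :=
      hP.mul tendsto_const_nhds
    have h2 : Tendsto (fun t : ℝ => Phi M (t + s)) atTop (𝓝 P) :=
      hP.comp (tendsto_atTop_add_const_right _ s tendsto_id)
    rw [show (fun t : ℝ => Phi M (t + s)) = fun t => Phi M t * Phi M s from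
      funext fun t => Phi_add M t s] at h2
    exact tendsto_nhds_unique h1 h2
  have hPP : P * P = P := by
    have h1 : Tendsto (fun t : ℝ => Phi M t * P) atTop (𝓝 (P * P)) :=
      hP.mul tendsto_const_nhds
    have h2 : Tendsto (fun t : ℝ => Phi M t * P) atTop (𝓝 P) := by
      rw [show (fun t : ℝ => Phi M t * P) = fun _ => P from funext fun t => hmulP t]
      exact tendsto_const_nhds
    exact tendsto_nhds_unique h1 h2
  set B := Phi M 1 - P with hB
  have hBpow : ∀ k : ℕ, B ^ (k + 1) = Phi M (k + 1 : ℝ) - P := by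
    intro k
    induction k with
    | zero => simp [hB]
    | succ k ih =>
      rw [pow_succ' B (k + 1), ih, hB]
      rw [mul_sub, sub_mul, sub_mul, ← Phi_add M 1 (k + 1 : ℝ), hmulP, hPmul, hPP]
      rw [show (1 : ℝ) + (k + 1 : ℝ) = ((k : ℝ) + 1 + 1) by ring]
      push_cast
      abel
  have hPnat : Tendsto (fun k : ℕ => Phi M ((k : ℝ) + 1)) atTop (𝓝 P) := by
    refine hP.comp ?_
    exact tendsto_atTop_add_const_right _ 1 tendsto_natCast_atTop_atTop
  have hBlim : Tendsto (fun k : ℕ => B ^ (k + 1)) atTop (𝓝 0) := by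
    rw [show (fun k : ℕ => B ^ (k + 1)) = fun k : ℕ => Phi M ((k : ℝ) + 1) - P from
      funext fun k => by rw [hBpow k]]
    have := hPnat.sub (tendsto_const_nhds (x := P))
    rwa [sub_self] at this
  have hsmall : ∃ m : ℕ, ‖B ^ (m + 1)‖ ≤ 1 / 2 := by
    have h := (tendsto_zero_iff_norm_tendsto_zero.mp hBlim).eventually
      (eventually_le_nhds (by norm_num : (0 : ℝ) < 1 / 2))
    obtain ⟨m, hm⟩ := h.exists
    exact ⟨m, hm⟩
  obtain ⟨m0, hm0⟩ := hsmall
  set m1 : ℕ := m0 + 1 with hm1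
  have hm1pos : 0 < (m1 : ℝ) := by positivity
  -- uniform bound of the semigroup on [0, m1]
  have hPhicont : Continuous (Phi M) :=
    continuous_iff_continuousAt.mpr fun t => (Phi_deriv M t).continuousAt
  obtain ⟨C0, hC0⟩ := (isCompact_Icc (a := (0:ℝ)) (b := (m1:ℝ))).exists_bound_of_continuousOn
    hPhicont.continuousOn
  set K := max C0 1 with hKdef
  have hK1 : (1:ℝ) ≤ K := le_max_right _ _
  have hK : ∀ s ∈ Set.Icc (0:ℝ) (m1:ℝ), ‖Phi M s‖ ≤ K :=
    fun s hs => (hC0 s hs).trans (le_max_left _ _)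
  set y0 := x 0 - xbar with hy0
  have hy0lim : Tendsto (fun t : ℝ => Phi M t y0) atTop (𝓝 0) := by
    rw [show (fun t : ℝ => Phi M t y0) = fun t => x t - xbar from
      funext fun t => (hrep t).symm]
    have := hxbar.sub (tendsto_const_nhds (x := xbar))
    rwa [sub_self] at this
  have hPy0 : P y0 = 0 := by
    have h1 : Tendsto (fun t : ℝ => Phi M t y0) atTop (𝓝 (P y0)) :=
      ((ContinuousLinearMap.apply ℝ (EuclideanSpace ℝ (Fin n)) y0).continuous.tendsto P).comp hP
    exact tendsto_nhds_unique h1 hy0lim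
  have hcontr : ∀ k : ℕ, ‖Phi M ((m1 : ℝ) * k) y0‖ ≤ (1/2:ℝ)^k * ‖y0‖ := by
    intro k
    cases k with
    | zero => simp [Phi_zero]
    | succ k =>
      set N : ℕ := m1 * (k + 1) with hN
      have hNpos : 0 < N := Nat.mul_pos (Nat.succ_pos m0) (Nat.succ_pos k)
      have hNeq : N = (N - 1) + 1 := (Nat.succ_pred_eq_of_pos hNpos).symm
      have hBN : B ^ N = Phi M (N : ℝ) - P := by
        rw [hNeq, hBpow (N-1)]
        have hcast : ((N - 1 : ℕ) : ℝ) + 1 = (((N-1) + 1 : ℕ) : ℝ) := by push_cast; ring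
        rw [hcast]
      have happ : Phi M ((m1:ℝ) * ((k:ℝ)+1)) y0 = (B ^ N) y0 := by
        have hcast : ((m1:ℝ) * ((k:ℝ)+1)) = (N:ℝ) := by rw [hN]; push_cast; ring
        rw [hcast, hBN]
        simp [ContinuousLinearMap.sub_apply, hPy0]
      have hgoal : ((k+1:ℕ):ℝ) = (k:ℝ)+1 := by push_cast; ring
      rw [hgoal, happ]
      have hBm1 : ‖B ^ N‖ ≤ (1/2:ℝ)^(k+1) := by
        have h1 : B ^ N = (B ^ m1) ^ (k+1) := by rw [hN, pow_mul]
        have h2 : ‖(B ^ m1) ^ (k+1)‖ ≤ ‖B ^ m1‖^(k+1) := norm_pow_le' _ (Nat.succ_pos k)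
        have h3 : ‖B ^ m1‖^(k+1) ≤ (1/2:ℝ)^(k+1) :=
          pow_le_pow_left₀ (norm_nonneg _) hm0 _
        rw [h1]; exact h2.trans h3
      calc ‖(B ^ N) y0‖ ≤ ‖B ^ N‖ * ‖y0‖ := ContinuousLinearMap.le_opNorm _ _
        _ ≤ (1/2:ℝ)^(k+1) * ‖y0‖ :=
            mul_le_mul_of_nonneg_right hBm1 (norm_nonneg _)
  -- conclusion
  have hKy0 : (0:ℝ) ≤ K * ‖y0‖ :=
    mul_nonneg (zero_le_one.trans hK1) (norm_nonneg _)
  refine ⟨xbar, 2*K*‖y0‖ + 1, Real.log 2 / m1, by nlinarith, 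
    div_pos (Real.log_pos one_lt_two) hm1pos, hxbar, ?_⟩
  intro t ht
  set k := ⌊t / m1⌋₊ with hk
  have hkle : (m1:ℝ) * k ≤ t := by
    have h := Nat.floor_le (div_nonneg ht hm1pos.le)
    calc (m1:ℝ)*k = (k:ℝ) * m1 := by ring
      _ ≤ (t/m1)*m1 := mul_le_mul_of_nonneg_right h hm1pos.le
      _ = t := div_mul_cancel₀ t hm1pos.ne'
  have hlt : t < (m1:ℝ) * ((k:ℝ)+1) := by
    have h := Nat.lt_floor_add_one (t / m1)
    calc t = (t/m1)*m1 := (div_mul_cancel₀ t hm1pos.ne').symm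
      _ < ((k:ℝ)+1)*m1 := by
          refine mul_lt_mul_of_pos_right ?_ hm1pos
          exact_mod_cast h
      _ = (m1:ℝ)*((k:ℝ)+1) := by ring
  have hs : t - (m1:ℝ)*k ∈ Set.Icc (0:ℝ) (m1:ℝ) :=
    ⟨by linarith, by nlinarith [hm1pos, (Nat.cast_nonneg k : (0:ℝ) ≤ k)]⟩
  have hsplit : Phi M t = Phi M (t - (m1:ℝ)*k) * Phi M ((m1:ℝ)*k) := by
    rw [← Phi_add]; congr 1; ring
  have hlog : (0:ℝ) < Real.log 2 := Real.log_pos one_lt_two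
  have hexp : (1/2:ℝ)^k ≤ 2 * Real.exp (-(Real.log 2 / m1) * t) := by
    have h2 : (1/2:ℝ)^k = Real.exp (-((k:ℝ) * Real.log 2)) := by
      rw [Real.exp_neg, Real.exp_nat_mul, Real.exp_log two_pos, one_div, inv_pow]
    have hineq : -((k:ℝ) * Real.log 2) ≤ Real.log 2 + (-(Real.log 2 / m1) * t) := by
      have h1 : (Real.log 2 / m1) * t < ((k:ℝ)+1) * Real.log 2 := by
        have ht1 : t / m1 < (k:ℝ)+1 := (div_lt_iff₀ hm1pos).mpr (by linarith)
        calc (Real.log 2 / m1) * t = Real.log 2 * (t / m1) := by ring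
          _ < Real.log 2 * ((k:ℝ)+1) := mul_lt_mul_of_pos_left ht1 hlog
          _ = ((k:ℝ)+1) * Real.log 2 := by ring
      linarith
    calc (1/2:ℝ)^k = Real.exp (-((k:ℝ)*Real.log 2)) := h2
      _ ≤ Real.exp (Real.log 2 + (-(Real.log 2/m1)*t)) := Real.exp_le_exp.mpr hineq
      _ = 2 * Real.exp (-(Real.log 2/m1)*t) := by rw [Real.exp_add, Real.exp_log two_pos]
  have hexp0 : (0:ℝ) ≤ Real.exp (-(Real.log 2 / m1) * t) := (Real.exp_pos _).le
  calc ‖x t - xbar‖ = ‖Phi M t y0‖ := by rw [hrep t]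
    _ = ‖Phi M (t - (m1:ℝ)*k) (Phi M ((m1:ℝ)*k) y0)‖ := by rw [hsplit]; rfl
    _ ≤ ‖Phi M (t - (m1:ℝ)*k)‖ * ‖Phi M ((m1:ℝ)*k) y0‖ := ContinuousLinearMap.le_opNorm _ _
    _ ≤ K * ((1/2:ℝ)^k * ‖y0‖) := by
        refine mul_le_mul (hK _ hs) (hcontr k) (norm_nonneg _) ?_
        linarith
    _ ≤ (2*K*‖y0‖+1) * Real.exp (-(Real.log 2 / m1) * t) := by
        have h2 : (K*‖y0‖)*(1/2:ℝ)^k ≤ (K*‖y0‖)*(2 * Real.exp (-(Real.log 2 / m1) * t)) :=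
          mul_le_mul_of_nonneg_left hexp hKy0
        nlinarith [hexp0]
end
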